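/- Let A ∈ ℝ^{n×m}, n ≥ m, with SVD A = UΣVᵀ, target rank k, A_k the best rank-k truncation and Ā_k = A − A_k. Let Z ∈ ℝ^{n×p} be full column rank with p ≤ rank(A), Ω_k = U_kᵀZ full row rank, T_k = Ω̄_kΩ_k⁺, S_k = (I + T_kT_kᵀ)^{−1/2}T_k. Then ‖[I_n − π(Z)]A‖²_{2} − ‖[I_n − π(Z)]Ā_k‖²_{2} ≤ ‖[I_n − π(Z)]A_k‖²_{2} ≤ min{‖S_k‖²_2 ‖Σ_k‖²_2, ‖T_kΣ_k‖²_2}, and the same chain of inequalities holds with the Frobenius norm in place of the spectral norm (with ‖Σ_k‖₂ unchanged in the first term of the min). -/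

import Mathlib

open Matrix

noncomputable def specNorm {m n : ℕ} (M : Matrix (Fin m) (Fin n) ℝ) : ℝ :=
  ‖LinearMap.toContinuousLinearMap (Matrix.toEuclideanLin M)‖

noncomputable def froNorm {m n : ℕ} (M : Matrix (Fin m) (Fin n) ℝ) : ℝ :=
  Real.sqrt (∑ i, ∑ j, (M i j)^2)

noncomputable def proj {n p : ℕ} (Z : Matrix (Fin n) (Fin p) ℝ) : Matrix (Fin n) (Fin n) ℝ :=
  Z * (Zᵀ * Z)⁻¹ * Zᵀ

noncomputable def pinvRow {k p : ℕ} (Ω : Matrix (Fin k) (Fin p) ℝ) : Matrix (Fin p) (Fin k) ℝ :=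
  Ωᵀ * (Ω * Ωᵀ)⁻¹

lemma onePlusMulSelfT_psd {l k : ℕ} (T : Matrix (Fin l) (Fin k) ℝ) :
    ((1 : Matrix (Fin l) (Fin l) ℝ) + T * Tᵀ).PosSemidef := by
  have h2 : (T * Tᵀ).PosSemidef := by
    simpa [Matrix.conjTranspose_eq_transpose_of_trivial] using Matrix.posSemidef_self_mul_conjTranspose T
  exact Matrix.PosSemidef.one.add h2

open scoped ComplexOrder in
/-- The square root of a positive semidefinite matrix, as `Matrix.PosSemidef.sqrt` was defined
in Mathlib of December 2024 (removed since). -/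
noncomputable def Matrix.PosSemidef.sqrt {n : Type*} [Fintype n] [DecidableEq n] {𝕜 : Type*}
    [RCLike 𝕜] {A : Matrix n n 𝕜} (hA : A.PosSemidef) : Matrix n n 𝕜 :=
  hA.1.eigenvectorUnitary.1 * diagonal ((↑) ∘ Real.sqrt ∘ hA.1.eigenvalues) *
    (star hA.1.eigenvectorUnitary : Matrix n n 𝕜)

noncomputable def sineMat {l k : ℕ} (T : Matrix (Fin l) (Fin k) ℝ) : Matrix (Fin l) (Fin k) ℝ :=
  ((onePlusMulSelfT_psd T).sqrt)⁻¹ * T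

lemma psdSqrt_posSemidef {l : ℕ} {A : Matrix (Fin l) (Fin l) ℝ} (hA : A.PosSemidef) :
    hA.sqrt.PosSemidef := by
  unfold Matrix.PosSemidef.sqrt
  rw [Matrix.star_eq_conjTranspose]
  apply Matrix.PosSemidef.mul_mul_conjTranspose_same
  rw [Matrix.posSemidef_diagonal_iff]
  intro i
  simp [Real.sqrt_nonneg]

lemma psdSqrt_mul_self {l : ℕ} {A : Matrix (Fin l) (Fin l) ℝ} (hA : A.PosSemidef) :
    hA.sqrt * hA.sqrt = A := by
  unfold Matrix.PosSemidef.sqrt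
  have hUU : (star hA.1.eigenvectorUnitary : Matrix (Fin l) (Fin l) ℝ) * hA.1.eigenvectorUnitary.1 = 1 := by
    simp
  conv_rhs => rw [hA.1.spectral_theorem, Unitary.conjStarAlgAut_apply]
  rw [show ∀ X Y Z : Matrix (Fin l) (Fin l) ℝ, X * Y * Z * (X * Y * Z) = X * Y * (Z * X) * Y * Z by
    intro X Y Z; simp only [Matrix.mul_assoc], hUU, Matrix.mul_one]
  congr 1
  rw [Matrix.mul_assoc]
  congr 1
  ext i j
  by_cases hij : i = j
  · subst hij; simp [Matrix.diagonal_apply, Real.mul_self_sqrt (hA.eigenvalues_nonneg i)]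
  · simp [Matrix.diagonal_apply, hij]

lemma specNorm_nonneg {a b : ℕ} (M : Matrix (Fin a) (Fin b) ℝ) : 0 ≤ specNorm M :=
  norm_nonneg _

lemma toEL_apply_eq {a b : ℕ} (M : Matrix (Fin a) (Fin b) ℝ) (x : EuclideanSpace ℝ (Fin b)) :
    (LinearMap.toContinuousLinearMap (Matrix.toEuclideanLin M)) x = Matrix.toEuclideanLin M x := rfl

lemma norm_toEL_le {a b : ℕ} (M : Matrix (Fin a) (Fin b) ℝ) (x : EuclideanSpace ℝ (Fin b)) :
    ‖Matrix.toEuclideanLin M x‖ ≤ specNorm M * ‖x‖ :=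
  (LinearMap.toContinuousLinearMap (Matrix.toEuclideanLin M)).le_opNorm x

lemma specNorm_le_bound {a b : ℕ} (M : Matrix (Fin a) (Fin b) ℝ) {c : ℝ} (hc : 0 ≤ c)
    (h : ∀ x : EuclideanSpace ℝ (Fin b), ‖Matrix.toEuclideanLin M x‖ ≤ c * ‖x‖) :
    specNorm M ≤ c :=
  ContinuousLinearMap.opNorm_le_bound _ hc h

lemma toEL_mul_apply {a b c : ℕ} (M : Matrix (Fin a) (Fin b) ℝ) (N : Matrix (Fin b) (Fin c) ℝ)
    (x : EuclideanSpace ℝ (Fin c)) :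
    Matrix.toEuclideanLin (M * N) x = Matrix.toEuclideanLin M (Matrix.toEuclideanLin N x) := by
  simp [Matrix.toEuclideanLin_apply, Matrix.mulVec_mulVec]

lemma norm_toEL_sq {a b : ℕ} (M : Matrix (Fin a) (Fin b) ℝ) (x : EuclideanSpace ℝ (Fin b)) :
    ‖Matrix.toEuclideanLin M x‖ ^ 2 =
      (WithLp.equiv 2 (Fin b → ℝ) x) ⬝ᵥ ((Mᵀ * M) *ᵥ (WithLp.equiv 2 (Fin b → ℝ) x)) := by
  set v := WithLp.equiv 2 (Fin b → ℝ) x with hv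
  rw [← real_inner_self_eq_norm_sq, EuclideanSpace.inner_eq_star_dotProduct]
  have h1 : (Matrix.toEuclideanLin M x).ofLp = M *ᵥ v := by
    simp [Matrix.toEuclideanLin_apply, hv]
  rw [h1, star_trivial, ← Matrix.mulVec_mulVec, dotProduct_mulVec v,
    Matrix.vecMul_transpose]

lemma psd_dot {c : ℕ} {Q : Matrix (Fin c) (Fin c) ℝ} (hQ : Q.PosSemidef) (v : Fin c → ℝ) :
    0 ≤ v ⬝ᵥ (Q *ᵥ v) := by simpa using hQ.dotProduct_mulVec_nonneg v

lemma specNorm_le_of_gram {a b c : ℕ} (M : Matrix (Fin a) (Fin c) ℝ)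
    (N : Matrix (Fin b) (Fin c) ℝ) (h : (Nᵀ * N - Mᵀ * M).PosSemidef) :
    specNorm M ≤ specNorm N := by
  refine specNorm_le_bound _ (specNorm_nonneg N) (fun x => ?_)
  have hsq : ‖Matrix.toEuclideanLin M x‖ ^ 2 ≤ ‖Matrix.toEuclideanLin N x‖ ^ 2 := by
    rw [norm_toEL_sq, norm_toEL_sq]
    have := psd_dot h (WithLp.equiv 2 (Fin c → ℝ) x)
    rw [Matrix.sub_mulVec, dotProduct_sub] at this
    linarith
  have h1 : ‖Matrix.toEuclideanLin M x‖ ≤ ‖Matrix.toEuclideanLin N x‖ :=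
    le_of_pow_le_pow_left₀ two_ne_zero (norm_nonneg _) hsq
  exact h1.trans (norm_toEL_le N x)

lemma specNorm_one_le {c : ℕ} : specNorm (1 : Matrix (Fin c) (Fin c) ℝ) ≤ 1 := by
  refine specNorm_le_bound _ zero_le_one (fun x => ?_)
  have : Matrix.toEuclideanLin (1 : Matrix (Fin c) (Fin c) ℝ) x = x := by
    simp [Matrix.toEuclideanLin_apply]
  rw [this, one_mul]

lemma specNorm_mul_le {a b c : ℕ} (M : Matrix (Fin a) (Fin b) ℝ) (N : Matrix (Fin b) (Fin c) ℝ) :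
    specNorm (M * N) ≤ specNorm M * specNorm N := by
  refine specNorm_le_bound _ (mul_nonneg (specNorm_nonneg M) (specNorm_nonneg N)) (fun x => ?_)
  rw [toEL_mul_apply]
  calc ‖Matrix.toEuclideanLin M (Matrix.toEuclideanLin N x)‖
      ≤ specNorm M * ‖Matrix.toEuclideanLin N x‖ := norm_toEL_le M _
    _ ≤ specNorm M * (specNorm N * ‖x‖) := by
        exact mul_le_mul_of_nonneg_left (norm_toEL_le N x) (specNorm_nonneg M)
    _ = specNorm M * specNorm N * ‖x‖ := by ring

lemma specNorm_sq_le_add {a a1 a2 c : ℕ} (M : Matrix (Fin a) (Fin c) ℝ)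
    (M1 : Matrix (Fin a1) (Fin c) ℝ) (M2 : Matrix (Fin a2) (Fin c) ℝ)
    (h : Mᵀ * M = M1ᵀ * M1 + M2ᵀ * M2) :
    specNorm M ^ 2 ≤ specNorm M1 ^ 2 + specNorm M2 ^ 2 := by
  set s := specNorm M1 ^ 2 + specNorm M2 ^ 2 with hs
  have hs0 : 0 ≤ s := by positivity
  have hbound : specNorm M ≤ Real.sqrt s := by
    refine specNorm_le_bound _ (Real.sqrt_nonneg s) (fun x => ?_)
    have hsq : ‖Matrix.toEuclideanLin M x‖ ^ 2 ≤ s * ‖x‖ ^ 2 := by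
      rw [norm_toEL_sq, h]
      rw [Matrix.add_mulVec, dotProduct_add, ← norm_toEL_sq, ← norm_toEL_sq]
      have h1 : ‖Matrix.toEuclideanLin M1 x‖ ^ 2 ≤ specNorm M1 ^ 2 * ‖x‖ ^ 2 := by
        rw [← mul_pow]; exact pow_le_pow_left₀ (norm_nonneg _) (norm_toEL_le M1 x) 2
      have h2 : ‖Matrix.toEuclideanLin M2 x‖ ^ 2 ≤ specNorm M2 ^ 2 * ‖x‖ ^ 2 := by
        rw [← mul_pow]; exact pow_le_pow_left₀ (norm_nonneg _) (norm_toEL_le M2 x) 2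
      rw [hs]; linarith
    refine le_of_pow_le_pow_left₀ two_ne_zero (by positivity) ?_
    rw [mul_pow, Real.sq_sqrt hs0]; exact hsq
  calc specNorm M ^ 2 ≤ Real.sqrt s ^ 2 :=
        pow_le_pow_left₀ (specNorm_nonneg M) hbound 2
    _ = s := Real.sq_sqrt hs0

lemma specNorm_transpose {a b : ℕ} (M : Matrix (Fin a) (Fin b) ℝ) :
    specNorm Mᵀ = specNorm M := by
  have hMT : Mᵀ = Mᴴ := (Matrix.conjTranspose_eq_transpose_of_trivial M).symm
  rw [specNorm, hMT, Matrix.toEuclideanLin_conjTranspose_eq_adjoint,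
    LinearMap.adjoint_toContinuousLinearMap]
  exact (ContinuousLinearMap.adjoint : (EuclideanSpace ℝ (Fin b) →L[ℝ] EuclideanSpace ℝ (Fin a))
    ≃ₗᵢ⋆[ℝ] _).norm_map _

lemma froNorm_nonneg {a b : ℕ} (M : Matrix (Fin a) (Fin b) ℝ) : 0 ≤ froNorm M :=
  Real.sqrt_nonneg _

lemma froNorm_sq {a b : ℕ} (M : Matrix (Fin a) (Fin b) ℝ) :
    froNorm M ^ 2 = ∑ i, ∑ j, (M i j) ^ 2 := by
  rw [froNorm, Real.sq_sqrt]
  positivity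

lemma froNorm_sq_eq_trace {a b : ℕ} (M : Matrix (Fin a) (Fin b) ℝ) :
    froNorm M ^ 2 = Matrix.trace (Mᵀ * M) := by
  rw [froNorm_sq, Matrix.trace]
  rw [Finset.sum_comm]
  congr 1; ext j
  simp [Matrix.diag, Matrix.mul_apply, Matrix.transpose_apply, pow_two]

lemma trace_nonneg_of_psd {c : ℕ} {Q : Matrix (Fin c) (Fin c) ℝ} (hQ : Q.PosSemidef) :
    0 ≤ Matrix.trace Q := by
  rw [Matrix.trace]
  refine Finset.sum_nonneg (fun j _ => ?_)
  have := psd_dot hQ (Pi.single j 1)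
  simpa [dotProduct_single, Matrix.mulVec_single, Matrix.diag] using this

lemma froNorm_le_of_gram {a b c : ℕ} (M : Matrix (Fin a) (Fin c) ℝ)
    (N : Matrix (Fin b) (Fin c) ℝ) (h : (Nᵀ * N - Mᵀ * M).PosSemidef) :
    froNorm M ≤ froNorm N := by
  have htr : froNorm M ^ 2 ≤ froNorm N ^ 2 := by
    rw [froNorm_sq_eq_trace, froNorm_sq_eq_trace]
    have := trace_nonneg_of_psd h
    rw [Matrix.trace_sub] at this
    linarith
  exact le_of_pow_le_pow_left₀ two_ne_zero (froNorm_nonneg N) htr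

lemma froNorm_mul_ortho {a b c : ℕ} (M : Matrix (Fin a) (Fin b) ℝ)
    (V : Matrix (Fin c) (Fin b) ℝ) (hV : Vᵀ * V = 1) :
    froNorm (M * Vᵀ) = froNorm M := by
  have h2 : froNorm (M * Vᵀ) ^ 2 = froNorm M ^ 2 := by
    rw [froNorm_sq_eq_trace, froNorm_sq_eq_trace, Matrix.transpose_mul,
      Matrix.transpose_transpose]
    calc Matrix.trace (V * Mᵀ * (M * Vᵀ)) = Matrix.trace (V * (Mᵀ * (M * Vᵀ))) := by
          rw [Matrix.mul_assoc]
      _ = Matrix.trace (Mᵀ * (M * Vᵀ) * V) := Matrix.trace_mul_comm _ _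
      _ = Matrix.trace (Mᵀ * M) := by
          rw [Matrix.mul_assoc Mᵀ, Matrix.mul_assoc M, hV, Matrix.mul_one]
  exact le_antisymm
    (le_of_pow_le_pow_left₀ two_ne_zero (froNorm_nonneg M) h2.le)
    (le_of_pow_le_pow_left₀ two_ne_zero (froNorm_nonneg _) h2.ge)

lemma diag_entry_sq_le_specNorm_sq {c : ℕ} (σ : Fin c → ℝ) (j : Fin c) :
    σ j ^ 2 ≤ specNorm (Matrix.diagonal σ) ^ 2 := by
  set u : EuclideanSpace ℝ (Fin c) := (WithLp.equiv 2 (Fin c → ℝ)).symm (Pi.single j 1) with hu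
  have hnormu : ‖u‖ ^ 2 = 1 := by
    have : ‖u‖ ^ 2 = (Pi.single j 1 : Fin c → ℝ) ⬝ᵥ ((1 : Matrix (Fin c) (Fin c) ℝ) *ᵥ Pi.single j 1) := by
      have h := norm_toEL_sq (1 : Matrix (Fin c) (Fin c) ℝ) u
      have he : Matrix.toEuclideanLin (1 : Matrix (Fin c) (Fin c) ℝ) u = u := by
        simp [Matrix.toEuclideanLin_apply]
      rw [he] at h
      simpa [hu] using h
    simp [Matrix.one_mulVec, dotProduct_single] at this
    simpa using this
  have hval : ‖Matrix.toEuclideanLin (Matrix.diagonal σ) u‖ ^ 2 = σ j ^ 2 := by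
    rw [norm_toEL_sq]
    have : (Matrix.diagonal σ)ᵀ * Matrix.diagonal σ = Matrix.diagonal (fun i => σ i ^ 2) := by
      rw [Matrix.diagonal_transpose, Matrix.diagonal_mul_diagonal]
      congr 1; ext i; ring
    rw [hu, this]
    simp [Matrix.mulVec_single, dotProduct, Pi.single_apply]
  have hle := norm_toEL_le (Matrix.diagonal σ) u
  have : ‖Matrix.toEuclideanLin (Matrix.diagonal σ) u‖ ^ 2 ≤
      (specNorm (Matrix.diagonal σ) * ‖u‖) ^ 2 :=
    pow_le_pow_left₀ (norm_nonneg _) hle 2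
  rw [hval, mul_pow, hnormu, mul_one] at this
  exact this

lemma froNorm_mul_diag_le {a c : ℕ} (S : Matrix (Fin a) (Fin c) ℝ) (σ : Fin c → ℝ) :
    froNorm (S * Matrix.diagonal σ) ^ 2 ≤ froNorm S ^ 2 * specNorm (Matrix.diagonal σ) ^ 2 := by
  rw [froNorm_sq, froNorm_sq, Finset.sum_mul]
  refine Finset.sum_le_sum (fun i _ => ?_)
  rw [Finset.sum_mul]
  refine Finset.sum_le_sum (fun j _ => ?_)
  have hentry : (S * Matrix.diagonal σ) i j = S i j * σ j := by
    simp [Matrix.mul_apply, Matrix.diagonal, Finset.sum_ite_eq, mul_comm]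
  rw [hentry, mul_pow]
  exact mul_le_mul_of_nonneg_left (diag_entry_sq_le_specNorm_sq σ j) (by positivity)

lemma isUnit_det_of_rank_eq {q : ℕ} (M : Matrix (Fin q) (Fin q) ℝ) (h : M.rank = q) :
    IsUnit M.det := by
  have hr : LinearMap.range M.mulVecLin = ⊤ := by
    apply Submodule.eq_top_of_finrank_eq
    rw [← Matrix.rank, h]
    simp [Module.finrank_pi]
  have hsurj : Function.Surjective M.mulVec := by
    intro y
    obtain ⟨x, hx⟩ := LinearMap.range_eq_top.mp hr y
    exact ⟨x, hx⟩
  rw [← Matrix.isUnit_iff_isUnit_det]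
  exact Matrix.mulVec_surjective_iff_isUnit.mp hsurj

lemma froNorm_transpose {a b : ℕ} (M : Matrix (Fin a) (Fin b) ℝ) : froNorm Mᵀ = froNorm M := by
  rw [froNorm, froNorm, Finset.sum_comm]
  rfl

/-- Theorem 1 (deterministic error bounds in spectral and Frobenius norms). -/
theorem deterministic_error_bounds {n m k p : ℕ} (hnm : m ≤ n) (hkp : k ≤ p)
    (A : Matrix (Fin n) (Fin m) ℝ)
    (Uk : Matrix (Fin n) (Fin k) ℝ) (Ubar : Matrix (Fin n) (Fin (n - k)) ℝ)
    (Vk : Matrix (Fin m) (Fin k) ℝ) (Vbar : Matrix (Fin m) (Fin (m - k)) ℝ)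
    (σ : Fin k → ℝ) (Sigb : Matrix (Fin (n - k)) (Fin (m - k)) ℝ)
    (hσ0 : ∀ i, 0 ≤ σ i) (hσmono : ∀ i j : Fin k, i ≤ j → σ j ≤ σ i)
    (hUk : Ukᵀ * Uk = 1) (hUbar : Ubarᵀ * Ubar = 1) (hUfull : Uk * Ukᵀ + Ubar * Ubarᵀ = 1)
    (hVk : Vkᵀ * Vk = 1) (hVbar : Vbarᵀ * Vbar = 1) (hVmix : Vkᵀ * Vbar = 0)
    (hA : A = Uk * Matrix.diagonal σ * Vkᵀ + Ubar * Sigb * Vbarᵀ)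
    (Z : Matrix (Fin n) (Fin p) ℝ) (hZ : Z.rank = p) (hp : p ≤ A.rank)
    (hΩ : (Ukᵀ * Z).rank = k) :
    -- notation
    ∀ P Ak Ab T S,
      P = (1 : Matrix (Fin n) (Fin n) ℝ) - proj Z →
      Ak = Uk * Matrix.diagonal σ * Vkᵀ →
      Ab = Ubar * Sigb * Vbarᵀ →
      T = (Ubarᵀ * Z) * pinvRow (Ukᵀ * Z) →
      S = sineMat T →
      (specNorm (P * A) ^ 2 - specNorm (P * Ab) ^ 2 ≤ specNorm (P * Ak) ^ 2 ∧
        specNorm (P * Ak) ^ 2 ≤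
          min (specNorm S ^ 2 * specNorm (Matrix.diagonal σ) ^ 2)
            (specNorm (T * Matrix.diagonal σ) ^ 2)) ∧
      (froNorm (P * A) ^ 2 - froNorm (P * Ab) ^ 2 ≤ froNorm (P * Ak) ^ 2 ∧
        froNorm (P * Ak) ^ 2 ≤
          min (froNorm S ^ 2 * specNorm (Matrix.diagonal σ) ^ 2)
            (froNorm (T * Matrix.diagonal σ) ^ 2)) := by
  intro P Ak Ab T S hP hAk hAb hT hS
  set D := Matrix.diagonal σ with hD
  clear_value D
  -- basic orthogonality facts
  have hUkUb : Ukᵀ * Ubar = 0 := by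
    have h1 : Ukᵀ * (Uk * Ukᵀ + Ubar * Ubarᵀ) = Ukᵀ := by rw [hUfull, Matrix.mul_one]
    rw [Matrix.mul_add, ← Matrix.mul_assoc, ← Matrix.mul_assoc, hUk, Matrix.one_mul] at h1
    have h2 : Ukᵀ * Ubar * Ubarᵀ = 0 := by
      have := add_eq_left.mp h1
      exact this
    calc Ukᵀ * Ubar = Ukᵀ * Ubar * (Ubarᵀ * Ubar) := by rw [hUbar, Matrix.mul_one]
      _ = Ukᵀ * Ubar * Ubarᵀ * Ubar := by rw [Matrix.mul_assoc (Ukᵀ * Ubar)]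
      _ = 0 := by rw [h2, Matrix.zero_mul]
  have hUbUk : Ubarᵀ * Uk = 0 := by
    have := congrArg Matrix.transpose hUkUb
    simpa [Matrix.transpose_mul] using this
  have hVbVk : Vbarᵀ * Vk = 0 := by
    have := congrArg Matrix.transpose hVmix
    simpa [Matrix.transpose_mul] using this
  -- invertibility
  have hZZ : IsUnit (Zᵀ * Z).det :=
    isUnit_det_of_rank_eq _ (by rw [Matrix.rank_transpose_mul_self, hZ])
  set Ω := Ukᵀ * Z with hΩdef
  clear_value Ω
  have hΩu : IsUnit (Ω * Ωᵀ).det := by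
    apply isUnit_det_of_rank_eq
    rw [show Ω * Ωᵀ = (Ωᵀ)ᵀ * Ωᵀ by rw [Matrix.transpose_transpose],
      Matrix.rank_transpose_mul_self, Matrix.rank_transpose, hΩ]
  have hΩpinv : Ω * pinvRow Ω = 1 := by
    rw [pinvRow, ← Matrix.mul_assoc, Matrix.mul_nonsing_inv _ hΩu]
  set W := Z * pinvRow Ω with hWdef
  clear_value W
  have hUkW : Ukᵀ * W = 1 := by
    rw [hWdef, ← Matrix.mul_assoc, ← hΩdef, hΩpinv]
  have hUbW : Ubarᵀ * W = T := by
    rw [hWdef, ← Matrix.mul_assoc, hT]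
  have hWUk : Wᵀ * Uk = 1 := by
    have := congrArg Matrix.transpose hUkW
    simpa [Matrix.transpose_mul] using this
  have hWexp : W = Uk + Ubar * T := by
    calc W = 1 * W := (Matrix.one_mul W).symm
      _ = (Uk * Ukᵀ + Ubar * Ubarᵀ) * W := by rw [hUfull]
      _ = Uk * (Ukᵀ * W) + Ubar * (Ubarᵀ * W) := by
          rw [Matrix.add_mul, Matrix.mul_assoc, Matrix.mul_assoc]
      _ = Uk + Ubar * T := by rw [hUkW, hUbW, Matrix.mul_one]
  have hWtW : Wᵀ * W = 1 + Tᵀ * T := by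
    rw [hWexp, Matrix.transpose_add, Matrix.transpose_mul, Matrix.add_mul, Matrix.mul_add,
      Matrix.mul_add, hUk]
    have e1 : Ukᵀ * (Ubar * T) = 0 := by rw [← Matrix.mul_assoc, hUkUb, Matrix.zero_mul]
    have e2 : Tᵀ * Ubarᵀ * Uk = 0 := by rw [Matrix.mul_assoc, hUbUk, Matrix.mul_zero]
    have e3 : Tᵀ * Ubarᵀ * (Ubar * T) = Tᵀ * T := by
      rw [Matrix.mul_assoc Tᵀ, ← Matrix.mul_assoc Ubarᵀ, hUbar, Matrix.one_mul]
    rw [e1, e2, e3]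
    simp
  set F := Tᵀ * T with hF
  clear_value F
  have hFpsd : F.PosSemidef := by
    have h := Matrix.posSemidef_conjTranspose_mul_self T
    rw [Matrix.conjTranspose_eq_transpose_of_trivial] at h
    rwa [hF]
  have hGpd : ((1 : Matrix (Fin k) (Fin k) ℝ) + F).PosDef :=
    Matrix.PosDef.one.add_posSemidef hFpsd
  have hGu : IsUnit ((1 : Matrix (Fin k) (Fin k) ℝ) + F).det :=
    isUnit_iff_ne_zero.mpr hGpd.det_pos.ne'
  set G := ((1 : Matrix (Fin k) (Fin k) ℝ) + F)⁻¹ with hG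
  clear_value G
  have hGpsd : G.PosSemidef := by rw [hG]; exact hGpd.inv.posSemidef
  have hGmul : ((1 : Matrix (Fin k) (Fin k) ℝ) + F) * G = 1 := by
    rw [hG]; exact Matrix.mul_nonsing_inv _ hGu
  have hGmul' : G * ((1 : Matrix (Fin k) (Fin k) ℝ) + F) = 1 := by
    rw [hG]; exact Matrix.nonsing_inv_mul _ hGu
  have hFG : F * G = 1 - G := by
    have h : G + F * G = 1 := by
      rw [show G + F * G = (1 + F) * G by rw [Matrix.add_mul, Matrix.one_mul], hGmul]
    exact eq_sub_of_add_eq' h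
  have hcomm1F : F * (1 + F) = (1 + F) * F := by
    rw [Matrix.mul_add, Matrix.add_mul, Matrix.mul_one, Matrix.one_mul]
  have hGF : G * F = F * G := by
    calc G * F = G * F * ((1 + F) * G) := by rw [hGmul, Matrix.mul_one]
      _ = G * F * (1 + F) * G := by rw [Matrix.mul_assoc (G * F)]
      _ = G * (F * (1 + F)) * G := by rw [Matrix.mul_assoc G F (1 + F)]
      _ = G * ((1 + F) * F) * G := by rw [hcomm1F]
      _ = G * (1 + F) * F * G := by rw [← Matrix.mul_assoc G (1 + F) F]
      _ = F * G := by rw [hGmul', Matrix.one_mul]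
  -- the square root matrix and S
  have hSval : S = ((onePlusMulSelfT_psd T).sqrt)⁻¹ * T := hS
  set R := (onePlusMulSelfT_psd T).sqrt with hRdef
  have hRpsd : R.PosSemidef := psdSqrt_posSemidef (onePlusMulSelfT_psd T)
  have hRR : R * R = 1 + T * Tᵀ := psdSqrt_mul_self (onePlusMulSelfT_psd T)
  clear_value R
  have hRt : Rᵀ = R := by
    have h := hRpsd.isHermitian.eq
    rwa [Matrix.conjTranspose_eq_transpose_of_trivial] at h
  have hFbpsd : (T * Tᵀ).PosSemidef := by
    have := Matrix.posSemidef_self_mul_conjTranspose T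
    rwa [Matrix.conjTranspose_eq_transpose_of_trivial] at this
  have h1Fbpd : ((1 : Matrix (Fin (n-k)) (Fin (n-k)) ℝ) + T * Tᵀ).PosDef :=
    Matrix.PosDef.one.add_posSemidef hFbpsd
  have h1Fbu : IsUnit ((1 : Matrix (Fin (n-k)) (Fin (n-k)) ℝ) + T * Tᵀ).det :=
    isUnit_iff_ne_zero.mpr h1Fbpd.det_pos.ne'
  have hRu : IsUnit R.det := by
    have hdet : R.det * R.det = ((1 : Matrix (Fin (n-k)) (Fin (n-k)) ℝ) + T * Tᵀ).det := by
      rw [← Matrix.det_mul, hRR]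
    apply isUnit_iff_ne_zero.mpr
    intro h0
    rw [h0, mul_zero] at hdet
    exact h1Fbpd.det_pos.ne' hdet.symm
  have hRinv2 : R⁻¹ * R⁻¹ = ((1 : Matrix (Fin (n-k)) (Fin (n-k)) ℝ) + T * Tᵀ)⁻¹ := by
    rw [← hRR, Matrix.mul_inv_rev]
  have hpush : ((1 : Matrix (Fin (n-k)) (Fin (n-k)) ℝ) + T * Tᵀ)⁻¹ * T = T * G := by
    have e : ((1 : Matrix (Fin (n-k)) (Fin (n-k)) ℝ) + T * Tᵀ) * T = T * (1 + F) := by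
      rw [Matrix.add_mul, Matrix.mul_add, Matrix.one_mul, Matrix.mul_one, hF, Matrix.mul_assoc]
    have key : ((1 : Matrix (Fin (n-k)) (Fin (n-k)) ℝ) + T * Tᵀ) * (T * G) = T := by
      rw [← Matrix.mul_assoc, e, Matrix.mul_assoc, hGmul, Matrix.mul_one]
    calc ((1 : Matrix (Fin (n-k)) (Fin (n-k)) ℝ) + T * Tᵀ)⁻¹ * T
        = ((1 : Matrix (Fin (n-k)) (Fin (n-k)) ℝ) + T * Tᵀ)⁻¹ *
          (((1 : Matrix (Fin (n-k)) (Fin (n-k)) ℝ) + T * Tᵀ) * (T * G)) := by rw [key]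
      _ = T * G := by rw [← Matrix.mul_assoc, Matrix.nonsing_inv_mul _ h1Fbu, Matrix.one_mul]
  have hSS : Sᵀ * S = F * G := by
    rw [hSval, Matrix.transpose_mul, Matrix.transpose_nonsing_inv, hRt]
    calc Tᵀ * R⁻¹ * (R⁻¹ * T) = Tᵀ * (R⁻¹ * (R⁻¹ * T)) := by rw [Matrix.mul_assoc]
      _ = Tᵀ * (R⁻¹ * R⁻¹ * T) := by rw [Matrix.mul_assoc R⁻¹]
      _ = Tᵀ * (T * G) := by rw [hRinv2, hpush]
      _ = F * G := by rw [← Matrix.mul_assoc, hF]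
  -- projector facts
  have hGt : Gᵀ = G := by
    have h := hGpsd.isHermitian.eq
    rwa [Matrix.conjTranspose_eq_transpose_of_trivial] at h
  set piW := W * G * Wᵀ with hpiWdef
  clear_value piW
  have hprojZt : (proj Z)ᵀ = proj Z := by
    have hZZt : ((Zᵀ * Z)⁻¹)ᵀ = (Zᵀ * Z)⁻¹ := by
      rw [Matrix.transpose_nonsing_inv, Matrix.transpose_mul, Matrix.transpose_transpose]
    rw [proj, Matrix.transpose_mul, Matrix.transpose_mul, Matrix.transpose_transpose, hZZt,
      ← Matrix.mul_assoc]
  have hprojZZ : proj Z * Z = Z := by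
    rw [proj, Matrix.mul_assoc (Z * (Zᵀ * Z)⁻¹), Matrix.mul_assoc Z,
      Matrix.nonsing_inv_mul _ hZZ, Matrix.mul_one]
  have pe : proj Z = Z * ((Zᵀ * Z)⁻¹ * Zᵀ) := by rw [proj, Matrix.mul_assoc]
  have hprojZidem : proj Z * proj Z = proj Z := by
    nth_rewrite 2 [pe]
    rw [← Matrix.mul_assoc, hprojZZ, ← pe]
  have hprojZW : proj Z * W = W := by
    rw [hWdef, ← Matrix.mul_assoc, hprojZZ]
  have hpiWt : piWᵀ = piW := by
    rw [hpiWdef, Matrix.transpose_mul, Matrix.transpose_mul, Matrix.transpose_transpose, hGt,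
      ← Matrix.mul_assoc]
  have hprojZpiW : proj Z * piW = piW := by
    rw [hpiWdef, ← Matrix.mul_assoc, ← Matrix.mul_assoc, hprojZW]
  have hpiWprojZ : piW * proj Z = piW := by
    have h := congrArg Matrix.transpose hprojZpiW
    rwa [Matrix.transpose_mul, hpiWt, hprojZt] at h
  have hpiWidem : piW * piW = piW := by
    have hstep : Wᵀ * (W * (G * Wᵀ)) = Wᵀ := by
      rw [← Matrix.mul_assoc, hWtW, ← Matrix.mul_assoc, hGmul, Matrix.one_mul]
    calc piW * piW = W * G * (Wᵀ * (W * (G * Wᵀ))) := by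
          rw [hpiWdef, Matrix.mul_assoc (W * G) Wᵀ, Matrix.mul_assoc W G Wᵀ]
      _ = piW := by rw [hstep, hpiWdef]
  have hQpsd : (proj Z - piW).PosSemidef := by
    have hQt : (proj Z - piW)ᵀ = proj Z - piW := by
      rw [Matrix.transpose_sub, hprojZt, hpiWt]
    have hQidem : (proj Z - piW) * (proj Z - piW) = proj Z - piW := by
      rw [Matrix.sub_mul, Matrix.mul_sub, Matrix.mul_sub, hprojZidem, hprojZpiW, hpiWprojZ,
        hpiWidem]
      simp
    have h := Matrix.posSemidef_conjTranspose_mul_self (proj Z - piW)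
    rwa [Matrix.conjTranspose_eq_transpose_of_trivial, hQt, hQidem] at h
  -- P facts
  have hPt : Pᵀ = P := by rw [hP, Matrix.transpose_sub, Matrix.transpose_one, hprojZt]
  have hPidem : P * P = P := by
    rw [hP, Matrix.sub_mul, Matrix.mul_sub, Matrix.mul_sub, Matrix.mul_one, Matrix.one_mul,
      hprojZidem]
    simp
  -- Gram computations
  have hDt : Dᵀ = D := by rw [hD, Matrix.diagonal_transpose]
  have hFt : Fᵀ = F := by rw [hF, Matrix.transpose_mul, Matrix.transpose_transpose]
  have hAkt : Akᵀ = Vk * D * Ukᵀ := by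
    rw [hAk, Matrix.transpose_mul, Matrix.transpose_mul, Matrix.transpose_transpose, hDt,
      ← Matrix.mul_assoc]
  have hsand : ∀ X : Matrix (Fin n) (Fin n) ℝ,
      Akᵀ * (X * Ak) = Vk * D * (Ukᵀ * (X * Uk)) * D * Vkᵀ := by
    intro X
    rw [hAkt, hAk, ← Matrix.mul_assoc X (Uk * D) Vkᵀ, ← Matrix.mul_assoc X Uk D,
      ← Matrix.mul_assoc (Vk * D * Ukᵀ) (X * Uk * D) Vkᵀ,
      ← Matrix.mul_assoc (Vk * D * Ukᵀ) (X * Uk) D,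
      Matrix.mul_assoc (Vk * D) Ukᵀ (X * Uk)]
  have hgramAkAk : Akᵀ * Ak = Vk * D * D * Vkᵀ := by
    have h := hsand 1
    rw [Matrix.one_mul, Matrix.one_mul, hUk, Matrix.mul_one] at h
    exact h
  have hpiWUk : piW * Uk = W * G := by
    rw [hpiWdef, Matrix.mul_assoc (W * G), hWUk, Matrix.mul_one]
  have hUkpiWUk : Ukᵀ * (piW * Uk) = G := by
    rw [hpiWUk, ← Matrix.mul_assoc, hUkW, Matrix.one_mul]
  have hgramPiW : Akᵀ * (piW * Ak) = Vk * D * G * D * Vkᵀ := by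
    rw [hsand piW, hUkpiWUk]
  have hgramS : (S * (D * Vkᵀ))ᵀ * (S * (D * Vkᵀ)) = Vk * D * (F * G) * D * Vkᵀ := by
    rw [Matrix.transpose_mul, Matrix.transpose_mul, Matrix.transpose_transpose, hDt,
      ← Matrix.mul_assoc (Vk * D * Sᵀ) S (D * Vkᵀ),
      Matrix.mul_assoc (Vk * D) Sᵀ S, hSS,
      ← Matrix.mul_assoc (Vk * D * (F * G)) D Vkᵀ]
  have hgramT : (T * D * Vkᵀ)ᵀ * (T * D * Vkᵀ) = Vk * D * F * D * Vkᵀ := by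
    rw [Matrix.transpose_mul, Matrix.transpose_mul, Matrix.transpose_transpose, hDt,
      ← Matrix.mul_assoc (Vk * (D * Tᵀ)) (T * D) Vkᵀ,
      Matrix.mul_assoc Vk (D * Tᵀ) (T * D), Matrix.mul_assoc D Tᵀ (T * D),
      ← Matrix.mul_assoc Tᵀ T D, ← hF, ← Matrix.mul_assoc D F D,
      ← Matrix.mul_assoc Vk (D * F) D, ← Matrix.mul_assoc Vk D F]
  have hgramP : (P * Ak)ᵀ * (P * Ak) = Vk * D * D * Vkᵀ - Akᵀ * (proj Z * Ak) := by
    have hPtP : Pᵀ * P = P := by rw [hPt, hPidem]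
    rw [Matrix.transpose_mul, Matrix.mul_assoc Akᵀ Pᵀ (P * Ak), ← Matrix.mul_assoc Pᵀ P Ak,
      hPtP, hP, Matrix.sub_mul, Matrix.one_mul, Matrix.mul_sub, hgramAkAk]
  -- PSD differences
  have hd1 : (S * (D * Vkᵀ))ᵀ * (S * (D * Vkᵀ)) - (P * Ak)ᵀ * (P * Ak)
      = Akᵀ * ((proj Z - piW) * Ak) := by
    rw [Matrix.sub_mul, Matrix.mul_sub, hgramPiW, hgramS, hgramP, hFG,
      Matrix.mul_sub (Vk * D), Matrix.mul_one, Matrix.sub_mul, Matrix.sub_mul]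
    abel
  have hpsd1 : ((S * (D * Vkᵀ))ᵀ * (S * (D * Vkᵀ)) - (P * Ak)ᵀ * (P * Ak)).PosSemidef := by
    rw [hd1]
    have h := hQpsd.conjTranspose_mul_mul_same Ak
    rwa [Matrix.conjTranspose_eq_transpose_of_trivial, Matrix.mul_assoc] at h
  have hFGF : F * G * F = F - F * G := by
    have h2 : F - F * G = F * F * G := by
      calc F - F * G = F * 1 - F * G := by rw [Matrix.mul_one]
        _ = F * (1 - G) := by rw [Matrix.mul_sub]
        _ = F * (F * G) := by rw [← hFG]
        _ = F * F * G := by rw [Matrix.mul_assoc]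
    rw [Matrix.mul_assoc F G F, hGF, ← Matrix.mul_assoc F F G, h2]
  have hd2 : (T * D * Vkᵀ)ᵀ * (T * D * Vkᵀ) - (S * (D * Vkᵀ))ᵀ * (S * (D * Vkᵀ))
      = (F * (D * Vkᵀ))ᵀ * G * (F * (D * Vkᵀ)) := by
    rw [hgramT, hgramS, Matrix.transpose_mul, Matrix.transpose_mul,
      Matrix.transpose_transpose, hDt, hFt,
      ← Matrix.mul_assoc (Vk * D * F * G) F (D * Vkᵀ),
      ← Matrix.mul_assoc (Vk * D * F * G * F) D Vkᵀ]
    rw [Matrix.mul_assoc (Vk * D) F G, Matrix.mul_assoc (Vk * D) (F * G) F, hFGF,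
      Matrix.mul_sub (Vk * D), Matrix.sub_mul, Matrix.sub_mul]
  have hpsd2 : ((T * D * Vkᵀ)ᵀ * (T * D * Vkᵀ)
      - (S * (D * Vkᵀ))ᵀ * (S * (D * Vkᵀ))).PosSemidef := by
    rw [hd2]
    have h := hGpsd.conjTranspose_mul_mul_same (F * (D * Vkᵀ))
    rwa [Matrix.conjTranspose_eq_transpose_of_trivial] at h
  have hpsd3 : ((T * D * Vkᵀ)ᵀ * (T * D * Vkᵀ) - (P * Ak)ᵀ * (P * Ak)).PosSemidef := by
    have h := hpsd2.add hpsd1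
    rwa [sub_add_sub_cancel] at h
  -- norm of Vkᵀ
  have hVkT1 : specNorm Vkᵀ ≤ 1 := by
    have hpsdV : (((1 : Matrix (Fin m) (Fin m) ℝ))ᵀ * 1 - Vkᵀᵀ * Vkᵀ).PosSemidef := by
      rw [Matrix.transpose_one, Matrix.one_mul, Matrix.transpose_transpose]
      have hJt : ((1 : Matrix (Fin m) (Fin m) ℝ) - Vk * Vkᵀ)ᵀ = 1 - Vk * Vkᵀ := by
        rw [Matrix.transpose_sub, Matrix.transpose_one, Matrix.transpose_mul,
          Matrix.transpose_transpose]
      have hVV : (Vk * Vkᵀ) * (Vk * Vkᵀ) = Vk * Vkᵀ := by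
        rw [Matrix.mul_assoc Vk Vkᵀ (Vk * Vkᵀ), ← Matrix.mul_assoc Vkᵀ Vk Vkᵀ, hVk,
          Matrix.one_mul]
      have hJidem : ((1 : Matrix (Fin m) (Fin m) ℝ) - Vk * Vkᵀ) * (1 - Vk * Vkᵀ)
          = 1 - Vk * Vkᵀ := by
        rw [Matrix.sub_mul, Matrix.mul_sub, Matrix.mul_sub, Matrix.mul_one, Matrix.one_mul, hVV]
        simp
      have h := Matrix.posSemidef_conjTranspose_mul_self
        ((1 : Matrix (Fin m) (Fin m) ℝ) - Vk * Vkᵀ)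
      rwa [Matrix.conjTranspose_eq_transpose_of_trivial, hJt, hJidem] at h
    exact (specNorm_le_of_gram Vkᵀ 1 hpsdV).trans specNorm_one_le
  -- spectral upper bounds
  have s1 : specNorm (P * Ak) ≤ specNorm (S * (D * Vkᵀ)) := specNorm_le_of_gram _ _ hpsd1
  have s2 : specNorm (S * (D * Vkᵀ)) ≤ specNorm S * specNorm D := by
    calc specNorm (S * (D * Vkᵀ)) ≤ specNorm S * specNorm (D * Vkᵀ) := specNorm_mul_le S _
      _ ≤ specNorm S * (specNorm D * specNorm Vkᵀ) :=
          mul_le_mul_of_nonneg_left (specNorm_mul_le D Vkᵀ) (specNorm_nonneg S)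
      _ ≤ specNorm S * (specNorm D * 1) := by
          refine mul_le_mul_of_nonneg_left ?_ (specNorm_nonneg S)
          exact mul_le_mul_of_nonneg_left hVkT1 (specNorm_nonneg D)
      _ = specNorm S * specNorm D := by rw [mul_one]
  have sspec1 : specNorm (P * Ak) ^ 2 ≤ specNorm S ^ 2 * specNorm D ^ 2 := by
    have h := pow_le_pow_left₀ (specNorm_nonneg _) (s1.trans s2) 2
    rwa [mul_pow] at h
  have s3 : specNorm (P * Ak) ≤ specNorm (T * D) := by
    have h1 : specNorm (P * Ak) ≤ specNorm (T * D * Vkᵀ) := specNorm_le_of_gram _ _ hpsd3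
    have h2 : specNorm (T * D * Vkᵀ) ≤ specNorm (T * D) * specNorm Vkᵀ :=
      specNorm_mul_le (T * D) Vkᵀ
    have h3 : specNorm (T * D) * specNorm Vkᵀ ≤ specNorm (T * D) * 1 :=
      mul_le_mul_of_nonneg_left hVkT1 (specNorm_nonneg _)
    rw [mul_one] at h3
    linarith
  have sspec2 : specNorm (P * Ak) ^ 2 ≤ specNorm (T * D) ^ 2 :=
    pow_le_pow_left₀ (specNorm_nonneg _) s3 2
  -- Frobenius upper bounds
  have f1 : froNorm (P * Ak) ≤ froNorm (S * (D * Vkᵀ)) := froNorm_le_of_gram _ _ hpsd1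
  have fS : froNorm (S * (D * Vkᵀ)) = froNorm (S * D) := by
    rw [← Matrix.mul_assoc]; exact froNorm_mul_ortho (S * D) Vk hVk
  have ffro1 : froNorm (P * Ak) ^ 2 ≤ froNorm S ^ 2 * specNorm D ^ 2 := by
    have hle : froNorm (P * Ak) ^ 2 ≤ froNorm (S * D) ^ 2 := by
      refine pow_le_pow_left₀ (froNorm_nonneg _) ?_ 2
      rw [← fS]; exact f1
    refine hle.trans ?_
    rw [hD]; exact froNorm_mul_diag_le S σ
  have f3 : froNorm (P * Ak) ≤ froNorm (T * D) := by
    have h1 : froNorm (P * Ak) ≤ froNorm (T * D * Vkᵀ) := froNorm_le_of_gram _ _ hpsd3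
    have h2 : froNorm (T * D * Vkᵀ) = froNorm (T * D) := froNorm_mul_ortho (T * D) Vk hVk
    linarith
  have ffro2 : froNorm (P * Ak) ^ 2 ≤ froNorm (T * D) ^ 2 :=
    pow_le_pow_left₀ (froNorm_nonneg _) f3 2
  -- lower bounds
  have hAsum : A = Ak + Ab := by rw [hAk, hAb, hA]
  have hAbt : Abᵀ = Vbar * Sigbᵀ * Ubarᵀ := by
    rw [hAb, Matrix.transpose_mul, Matrix.transpose_mul, Matrix.transpose_transpose,
      ← Matrix.mul_assoc]
  have hcross1 : Ak * Abᵀ = 0 := by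
    rw [hAk, hAbt, Matrix.mul_assoc (Uk * D) Vkᵀ (Vbar * Sigbᵀ * Ubarᵀ),
      ← Matrix.mul_assoc Vkᵀ (Vbar * Sigbᵀ) Ubarᵀ, ← Matrix.mul_assoc Vkᵀ Vbar Sigbᵀ,
      hVmix, Matrix.zero_mul, Matrix.zero_mul, Matrix.mul_zero]
  have hcross2 : Ab * Akᵀ = 0 := by
    have h := congrArg Matrix.transpose hcross1
    rwa [Matrix.transpose_mul, Matrix.transpose_transpose, Matrix.transpose_zero] at h
  have hAAT : A * Aᵀ = Ak * Akᵀ + Ab * Abᵀ := by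
    rw [hAsum, Matrix.transpose_add, Matrix.mul_add, Matrix.add_mul, Matrix.add_mul,
      hcross1, hcross2]
    simp
  have hsqP : ∀ B : Matrix (Fin n) (Fin m) ℝ, (P * B) * (P * B)ᵀ = P * (B * Bᵀ) * Pᵀ := by
    intro B
    rw [Matrix.transpose_mul, ← Matrix.mul_assoc (P * B) Bᵀ Pᵀ, Matrix.mul_assoc P B Bᵀ]
  have hkey : ((P * A)ᵀ)ᵀ * (P * A)ᵀ = ((P * Ak)ᵀ)ᵀ * (P * Ak)ᵀ + ((P * Ab)ᵀ)ᵀ * (P * Ab)ᵀ := by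
    rw [Matrix.transpose_transpose, Matrix.transpose_transpose, Matrix.transpose_transpose,
      hsqP, hsqP, hsqP, hAAT, Matrix.mul_add, Matrix.add_mul]
  have hspec := specNorm_sq_le_add ((P * A)ᵀ) ((P * Ak)ᵀ) ((P * Ab)ᵀ) hkey
  rw [specNorm_transpose, specNorm_transpose, specNorm_transpose] at hspec
  have hfro : froNorm (P * A) ^ 2 = froNorm (P * Ak) ^ 2 + froNorm (P * Ab) ^ 2 := by
    have h1 := froNorm_sq_eq_trace ((P * A)ᵀ)
    rw [hkey, Matrix.trace_add, ← froNorm_sq_eq_trace, ← froNorm_sq_eq_trace,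
      froNorm_transpose, froNorm_transpose, froNorm_transpose] at h1
    exact h1
  refine ⟨⟨?_, ?_⟩, ⟨?_, ?_⟩⟩
  · linarith
  · exact le_min sspec1 sspec2
  · linarith
  · exact le_min ffro1 ffro2
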